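/- For any interval K and weight w, if h_K is the Haar function on K and h^w_I is the weighted Haar function for an interval I ⊇ K, then |⟨h_K, h^w_I⟩_w| ≤ (average of w over K)^{1/2}, where ⟨f,g⟩_w = ∫ f g w dx. -/

import Mathlib

open MeasureTheory Set

/-- A dyadic interval `[k·2⁻ⁿ, (k+1)·2⁻ⁿ)`. -/
structure DyadicI where
  n : ℤ
  k : ℤ

namespace DyadicI

noncomputable def len (I : DyadicI) : ℝ := (2:ℝ) ^ (-I.n)

noncomputable def left (I : DyadicI) : ℝ := I.k * I.len

noncomputable def set (I : DyadicI) : Set ℝ := Set.Ico I.left (I.left + I.len)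

/-- left half -/
def minus (I : DyadicI) : DyadicI := ⟨I.n + 1, 2 * I.k⟩

/-- right half -/
def plus (I : DyadicI) : DyadicI := ⟨I.n + 1, 2 * I.k + 1⟩

/-- dyadic parent -/
def parent (I : DyadicI) : DyadicI := ⟨I.n - 1, Int.fdiv I.k 2⟩

/-- `w(I) = ∫_I w` -/
noncomputable def intg (w : ℝ → ℝ) (I : DyadicI) : ℝ := ∫ x in I.set, w x

/-- `⟨w⟩_I = |I|⁻¹ ∫_I w` -/
noncomputable def avg (w : ℝ → ℝ) (I : DyadicI) : ℝ := (∫ x in I.set, w x) / I.len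

/-- Haar function `h_I = |I|^{-1/2}(χ_{I₊} - χ_{I₋})` -/
noncomputable def haar (I : DyadicI) : ℝ → ℝ := fun x =>
  (1 / Real.sqrt I.len) *
    (I.plus.set.indicator (fun _ => (1:ℝ)) x - I.minus.set.indicator (fun _ => (1:ℝ)) x)

/-- weighted Haar function `h^w_I` -/
noncomputable def whaar (w : ℝ → ℝ) (I : DyadicI) : ℝ → ℝ := fun x =>
  (1 / Real.sqrt (intg w I)) *
    (Real.sqrt (intg w I.minus / intg w I.plus) * I.plus.set.indicator (fun _ => (1:ℝ)) x
      - Real.sqrt (intg w I.plus / intg w I.minus) * I.minus.set.indicator (fun _ => (1:ℝ)) x)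

/-- `Δ_I w = (⟨w⟩_{I₊} − ⟨w⟩_{I₋})/2` -/
noncomputable def del (w : ℝ → ℝ) (I : DyadicI) : ℝ := (avg w I.plus - avg w I.minus) / 2

end DyadicI

/-- weighted inner product `⟨f,g⟩_w = ∫ f g w` -/
noncomputable def wip (w f g : ℝ → ℝ) : ℝ := ∫ x, f x * g x * w x

/-- a weight: locally integrable and positive a.e. -/
def IsWeight (w : ℝ → ℝ) : Prop :=
  MeasureTheory.LocallyIntegrable w ∧ ∀ᵐ x ∂(volume : Measure ℝ), 0 < w x

noncomputable def winv (w : ℝ → ℝ) : ℝ → ℝ := fun x => (w x)⁻¹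

/-- membership in dyadic A₂ -/
def MemA2d (w : ℝ → ℝ) : Prop :=
  BddAbove (Set.range fun I : DyadicI => DyadicI.avg w I * DyadicI.avg (winv w) I)

/-- the dyadic A₂ characteristic `[w]_{A₂^d}` -/
noncomputable def A2d (w : ℝ → ℝ) : ℝ :=
  ⨆ I : DyadicI, DyadicI.avg w I * DyadicI.avg (winv w) I

/-- the dyadic BMO norm -/
noncomputable def bmoD (b : ℝ → ℝ) : ℝ :=
  ⨆ I : DyadicI, (∫ x in I.set, |b x - DyadicI.avg b I|) / I.len

/-- membership in dyadic BMO -/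
def MemBMOd (b : ℝ → ℝ) : Prop :=
  BddAbove (Set.range fun I : DyadicI => (∫ x in I.set, |b x - DyadicI.avg b I|) / I.len)

namespace DyadicI

lemma len_pos (J : DyadicI) : 0 < J.len := zpow_pos two_pos _

lemma minus_len (J : DyadicI) : J.minus.len = J.len / 2 := by
  simp only [len, minus, neg_add]
  rw [zpow_add₀ (two_ne_zero)]
  norm_num
  ring

lemma plus_len (J : DyadicI) : J.plus.len = J.len / 2 := by
  simp only [len, plus, neg_add]
  rw [zpow_add₀ (two_ne_zero)]
  norm_num
  ring

lemma minus_left (J : DyadicI) : J.minus.left = J.left := by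
  rw [left, left, minus_len]
  have hk : J.minus.k = 2 * J.k := rfl
  rw [hk]
  push_cast
  ring

lemma plus_left (J : DyadicI) : J.plus.left = J.left + J.len / 2 := by
  rw [left, left, plus_len]
  have hk : J.plus.k = 2 * J.k + 1 := rfl
  rw [hk]
  push_cast
  ring

lemma set_eq_union (J : DyadicI) : J.minus.set ∪ J.plus.set = J.set := by
  have h2 : J.left + J.len / 2 + J.len / 2 = J.left + J.len := by ring
  simp only [set, minus_left, plus_left, minus_len, plus_len, h2]
  exact Set.Ico_union_Ico_eq_Ico (by linarith [J.len_pos]) (by linarith [J.len_pos])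

lemma disjoint_halves (J : DyadicI) : Disjoint J.minus.set J.plus.set := by
  simp only [set, minus_left, plus_left, minus_len]
  exact Set.Ico_disjoint_Ico_same

lemma measurableSet_set (J : DyadicI) : MeasurableSet J.set := measurableSet_Ico

lemma integrableOn (w : ℝ → ℝ) (hw : IsWeight w) (J : DyadicI) :
    IntegrableOn w J.set := by
  have := hw.1.integrableOn_isCompact (isCompact_Icc (a := J.left) (b := J.left + J.len))
  exact this.mono_set Set.Ico_subset_Icc_self

lemma intg_pos (w : ℝ → ℝ) (hw : IsWeight w) (J : DyadicI) : 0 < intg w J := by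
  have hint := integrableOn w hw J
  rw [intg, setIntegral_pos_iff_support_of_nonneg_ae
    ((ae_restrict_iff' J.measurableSet_set).2 (hw.2.mono fun x hx _ => hx.le)) hint]
  have hnull : volume (J.set \ Function.support w) = 0 := by
    refine measure_mono_null (fun x hx => ?_) (ae_iff.mp hw.2)
    simp only [Set.mem_setOf_eq, not_lt]
    rcases hx with ⟨_, hxs⟩
    simp [Function.notMem_support.mp hxs]
  have hle : volume J.set ≤ volume (Function.support w ∩ J.set) := by
    calc volume J.set ≤ volume (J.set ∩ Function.support w)
          + volume (J.set \ Function.support w) := measure_le_inter_add_diff _ _ _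
      _ = volume (Function.support w ∩ J.set) := by rw [hnull, add_zero, Set.inter_comm]
  refine lt_of_lt_of_le ?_ hle
  rw [set, Real.volume_Ico]
  simp only [add_sub_cancel_left]
  exact ENNReal.ofReal_pos.2 J.len_pos

lemma intg_split (w : ℝ → ℝ) (hw : IsWeight w) (J : DyadicI) :
    intg w J = intg w J.minus + intg w J.plus := by
  rw [intg, ← J.set_eq_union,
    setIntegral_union J.disjoint_halves J.plus.measurableSet_set
      ((integrableOn w hw J).mono_set (by rw [← J.set_eq_union]; exact subset_union_left))
      ((integrableOn w hw J).mono_set (by rw [← J.set_eq_union]; exact subset_union_right))]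
  rfl

end DyadicI

lemma sq_indicator_comb (c p m : ℝ) {S T : Set ℝ} (hd : Disjoint S T) (x : ℝ) :
    (c * (p * S.indicator (fun _ => (1:ℝ)) x - m * T.indicator (fun _ => (1:ℝ)) x))^2
      = c^2 * (p^2 * S.indicator (fun _ => (1:ℝ)) x + m^2 * T.indicator (fun _ => (1:ℝ)) x) := by
  by_cases hS : x ∈ S <;> by_cases hT : x ∈ T
  · exact absurd hT (Set.disjoint_left.mp hd hS)
  all_goals simp [hS, hT] <;> ring

lemma indicator_one_mul (S : Set ℝ) (w : ℝ → ℝ) (x : ℝ) :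
    S.indicator (fun _ => (1:ℝ)) x * w x = S.indicator w x := by
  by_cases h : x ∈ S <;> simp [h]

/-- integral of `(coefficient combination of half-indicators)² · w` -/
lemma integral_sq_comb (w : ℝ → ℝ) (hw : IsWeight w) (J : DyadicI) (c p m : ℝ) :
    (∫ x, (c * (p * J.plus.set.indicator (fun _ => (1:ℝ)) x
        - m * J.minus.set.indicator (fun _ => (1:ℝ)) x))^2 * w x)
      = c^2 * (p^2 * DyadicI.intg w J.plus + m^2 * DyadicI.intg w J.minus) := by
  have hd := J.disjoint_halves
  have hptw : ∀ x, (c * (p * J.plus.set.indicator (fun _ => (1:ℝ)) x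
        - m * J.minus.set.indicator (fun _ => (1:ℝ)) x))^2 * w x
      = c^2 * (p^2 * J.plus.set.indicator w x + m^2 * J.minus.set.indicator w x) := by
    intro x
    rw [sq_indicator_comb c p m hd.symm x, ← indicator_one_mul J.plus.set w x,
      ← indicator_one_mul J.minus.set w x]
    ring
  rw [integral_congr_ae (Filter.Eventually.of_forall hptw)]
  have hip : Integrable (J.plus.set.indicator w) :=
    (integrable_indicator_iff J.plus.measurableSet_set).2 (DyadicI.integrableOn w hw J.plus)
  have him : Integrable (J.minus.set.indicator w) :=
    (integrable_indicator_iff J.minus.measurableSet_set).2 (DyadicI.integrableOn w hw J.minus)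
  rw [integral_const_mul]
  rw [integral_add (hip.const_mul _) (him.const_mul _), integral_const_mul, integral_const_mul,
    integral_indicator J.plus.measurableSet_set, integral_indicator J.minus.measurableSet_set]
  rfl

lemma integrable_sq_comb (w : ℝ → ℝ) (hw : IsWeight w) (J : DyadicI) (c p m : ℝ) :
    Integrable (fun x => (c * (p * J.plus.set.indicator (fun _ => (1:ℝ)) x
        - m * J.minus.set.indicator (fun _ => (1:ℝ)) x))^2 * w x) := by
  have hd := J.disjoint_halves
  have hptw : ∀ x, (c * (p * J.plus.set.indicator (fun _ => (1:ℝ)) x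
        - m * J.minus.set.indicator (fun _ => (1:ℝ)) x))^2 * w x
      = c^2 * (p^2 * J.plus.set.indicator w x + m^2 * J.minus.set.indicator w x) := by
    intro x
    rw [sq_indicator_comb c p m hd.symm x, ← indicator_one_mul J.plus.set w x,
      ← indicator_one_mul J.minus.set w x]
    ring
  have hip : Integrable (J.plus.set.indicator w) :=
    (integrable_indicator_iff J.plus.measurableSet_set).2 (DyadicI.integrableOn w hw J.plus)
  have him : Integrable (J.minus.set.indicator w) :=
    (integrable_indicator_iff J.minus.measurableSet_set).2 (DyadicI.integrableOn w hw J.minus)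
  exact (Integrable.congr (((hip.const_mul _).add (him.const_mul _)).const_mul _)
    (Filter.Eventually.of_forall fun x => (hptw x).symm))

/-- `|⟨h_K, h^w_I⟩_w| ≤ ⟨w⟩_K^{1/2}` for `K ⊆ I`. -/
theorem stmt0 (w : ℝ → ℝ) (hw : IsWeight w) (K I : DyadicI) (hKI : K.set ⊆ I.set) :
    |wip w (DyadicI.haar K) (DyadicI.whaar w I)| ≤ Real.sqrt (DyadicI.avg w K) := by
  obtain ⟨hloc, hpos⟩ := hw
  have hw' : IsWeight w := ⟨hloc, hpos⟩
  have hw0 : ∀ᵐ x ∂(volume : Measure ℝ), 0 ≤ w x := hpos.mono fun x h => h.le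
  set f := DyadicI.haar K with hf_def
  set g := DyadicI.whaar w I with hg_def
  set F := fun x => f x * Real.sqrt (w x) with hF_def
  set G := fun x => g x * Real.sqrt (w x) with hG_def
  -- rewrite f, g in the common combination form
  have hf_eq : ∀ x, f x = (1 / Real.sqrt K.len) *
      (1 * K.plus.set.indicator (fun _ => (1:ℝ)) x
        - 1 * K.minus.set.indicator (fun _ => (1:ℝ)) x) := by
    intro x; simp only [hf_def, DyadicI.haar, one_mul]
  set cI := 1 / Real.sqrt (DyadicI.intg w I) with hcI
  set pI := Real.sqrt (DyadicI.intg w I.minus / DyadicI.intg w I.plus) with hpI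
  set mI := Real.sqrt (DyadicI.intg w I.plus / DyadicI.intg w I.minus) with hmI
  have hg_eq : ∀ x, g x = cI *
      (pI * I.plus.set.indicator (fun _ => (1:ℝ)) x
        - mI * I.minus.set.indicator (fun _ => (1:ℝ)) x) := by
    intro x; rfl
  -- positivity of various integrals
  have hWI := DyadicI.intg_pos w hw' I
  have hWIp := DyadicI.intg_pos w hw' I.plus
  have hWIm := DyadicI.intg_pos w hw' I.minus
  have hWKp := DyadicI.intg_pos w hw' K.plus
  have hWKm := DyadicI.intg_pos w hw' K.minus
  -- squares of functions, times w, are integrable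
  have hintF2 : Integrable (fun x => f x ^ 2 * w x) := by
    have := integrable_sq_comb w hw' K (1 / Real.sqrt K.len) 1 1
    exact this.congr (Filter.Eventually.of_forall fun x => by simp only [hf_eq x])
  have hintG2 : Integrable (fun x => g x ^ 2 * w x) := by
    have := integrable_sq_comb w hw' I cI pI mI
    exact this.congr (Filter.Eventually.of_forall fun x => by simp only [hg_eq x])
  -- measurability
  have hfm : AEStronglyMeasurable f volume := by
    refine (Measurable.aestronglyMeasurable ?_)
    apply Measurable.const_mul
    exact ((measurable_const.indicator K.plus.measurableSet_set).sub
      (measurable_const.indicator K.minus.measurableSet_set))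
  have hgm : AEStronglyMeasurable g volume := by
    refine (Measurable.aestronglyMeasurable ?_)
    apply Measurable.const_mul
    exact ((measurable_const.indicator I.plus.measurableSet_set).const_mul _ |>.sub
      ((measurable_const.indicator I.minus.measurableSet_set).const_mul _))
  have hsw : AEStronglyMeasurable (fun x => Real.sqrt (w x)) volume :=
    Real.continuous_sqrt.comp_aestronglyMeasurable hloc.aestronglyMeasurable
  have hFm : AEStronglyMeasurable F volume := hfm.mul hsw
  have hGm : AEStronglyMeasurable G volume := hgm.mul hsw
  -- F², G² integrable
  have hF2 : ∀ᵐ x ∂(volume : Measure ℝ), F x ^ 2 = f x ^ 2 * w x := by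
    filter_upwards [hw0] with x hx
    simp only [hF_def, mul_pow, Real.sq_sqrt hx]
  have hG2 : ∀ᵐ x ∂(volume : Measure ℝ), G x ^ 2 = g x ^ 2 * w x := by
    filter_upwards [hw0] with x hx
    simp only [hG_def, mul_pow, Real.sq_sqrt hx]
  have hmF : MemLp F 2 volume :=
    (memLp_two_iff_integrable_sq hFm).2 (hintF2.congr (hF2.mono fun x hx => hx.symm))
  have hmG : MemLp G 2 volume :=
    (memLp_two_iff_integrable_sq hGm).2 (hintG2.congr (hG2.mono fun x hx => hx.symm))
  -- the two L² norms
  have hIF2 : (∫ x, f x ^ 2 * w x) = DyadicI.avg w K := by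
    have h := integral_sq_comb w hw' K (1 / Real.sqrt K.len) 1 1
    have heq : (fun x => f x ^ 2 * w x) = (fun x =>
        ((1 / Real.sqrt K.len) * (1 * K.plus.set.indicator (fun _ => (1:ℝ)) x
          - 1 * K.minus.set.indicator (fun _ => (1:ℝ)) x)) ^ 2 * w x) := by
      funext x; rw [hf_eq x]
    rw [heq, h]
    have hK := K.len_pos
    rw [div_pow, one_pow, Real.sq_sqrt hK.le, DyadicI.avg, ← DyadicI.intg,
      DyadicI.intg_split w hw' K]
    field_simp
    ring
  have hIG2 : (∫ x, g x ^ 2 * w x) = 1 := by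
    have h := integral_sq_comb w hw' I cI pI mI
    have heq : (fun x => g x ^ 2 * w x) = (fun x =>
        (cI * (pI * I.plus.set.indicator (fun _ => (1:ℝ)) x
          - mI * I.minus.set.indicator (fun _ => (1:ℝ)) x)) ^ 2 * w x) := by
      funext x; rw [hg_eq x]
    rw [heq, h]
    rw [hcI, hpI, hmI, div_pow, one_pow, Real.sq_sqrt hWI.le,
      Real.sq_sqrt (div_nonneg hWIm.le hWIp.le), Real.sq_sqrt (div_nonneg hWIp.le hWIm.le),
      div_mul_cancel₀ _ hWIp.ne', div_mul_cancel₀ _ hWIm.ne',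
      DyadicI.intg_split w hw' I]
    rw [one_div, inv_mul_eq_div, div_eq_one_iff_eq (by positivity)]
  -- step 1: wip = ∫ F G
  have h1 : wip w f g = ∫ x, F x * G x := by
    refine integral_congr_ae ?_
    filter_upwards [hw0] with x hx
    simp only [hF_def, hG_def]
    rw [show f x * Real.sqrt (w x) * (g x * Real.sqrt (w x))
        = f x * g x * (Real.sqrt (w x) * Real.sqrt (w x)) by ring,
      Real.mul_self_sqrt hx]
  -- step 2: Cauchy–Schwarz
  have hpq : Real.HolderConjugate 2 2 := Real.holderConjugate_iff.mpr ⟨one_lt_two, by norm_num⟩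
  have hCS := integral_mul_norm_le_Lp_mul_Lq (μ := (volume : Measure ℝ)) hpq
    (by rwa [show ENNReal.ofReal (2:ℝ) = 2 by norm_num] : MemLp F (ENNReal.ofReal 2) volume)
    (by rwa [show ENNReal.ofReal (2:ℝ) = 2 by norm_num] : MemLp G (ENNReal.ofReal 2) volume)
  have h2 : |∫ x, F x * G x| ≤ ∫ x, ‖F x‖ * ‖G x‖ := by
    calc |∫ x, F x * G x| = ‖∫ x, F x * G x‖ := (Real.norm_eq_abs _).symm
      _ ≤ ∫ x, ‖F x * G x‖ := norm_integral_le_integral_norm _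
      _ = ∫ x, ‖F x‖ * ‖G x‖ := by simp [norm_mul]
  -- identify the rpow integrals
  have hnormF : (∫ x, ‖F x‖ ^ (2:ℝ)) = DyadicI.avg w K := by
    rw [← hIF2]
    refine integral_congr_ae ?_
    filter_upwards [hF2] with x hx
    rw [show ((2:ℝ)) = ((2:ℕ):ℝ) by norm_num, Real.rpow_natCast, Real.norm_eq_abs, sq_abs, hx]
  have hnormG : (∫ x, ‖G x‖ ^ (2:ℝ)) = 1 := by
    rw [← hIG2]
    refine integral_congr_ae ?_
    filter_upwards [hG2] with x hx
    rw [show ((2:ℝ)) = ((2:ℕ):ℝ) by norm_num, Real.rpow_natCast, Real.norm_eq_abs, sq_abs, hx]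
  rw [hnormF, hnormG] at hCS
  have havg_nonneg : 0 ≤ DyadicI.avg w K := by
    have := DyadicI.intg_pos w hw' K
    exact le_of_lt (div_pos this K.len_pos)
  calc |wip w f g| = |∫ x, F x * G x| := by rw [h1]
    _ ≤ ∫ x, ‖F x‖ * ‖G x‖ := h2
    _ ≤ (DyadicI.avg w K) ^ ((1:ℝ)/2) * (1:ℝ) ^ ((1:ℝ)/2) := hCS
    _ = Real.sqrt (DyadicI.avg w K) := by
        rw [Real.one_rpow, mul_one, ← Real.sqrt_eq_rpow]
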